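/- The falling factorial x^(n) has the Charlier expansion x^(n) = ∑_{m=0}^n μ^n ((−n)_m/m!) c_m^{(μ)}(x) for nonzero μ. -/

import Mathlib

open Finset

/-- Pochhammer symbol `(a)_k = a(a+1)⋯(a+k−1)`. -/
noncomputable def poch (a : ℝ) (k : ℕ) : ℝ := ∏ j ∈ Finset.range k, (a + j)

/-- Falling factorial `x⁽ⁿ⁾ = x(x-1)⋯(x-n+1)`. -/
noncomputable def fallingFac (x : ℝ) (n : ℕ) : ℝ := ∏ j ∈ Finset.range n, (x - j)

/-- Charlier polynomial `c_n^{(μ)}(x) = ∑_{k=0}^n (−n)_k (−x)_k (−1/μ)^k / k!`. -/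
noncomputable def charlier (n : ℕ) (μ x : ℝ) : ℝ :=
  ∑ k ∈ Finset.range (n + 1),
    poch (-(n : ℝ)) k * poch (-x) k * (-1 / μ) ^ k / (Nat.factorial k)

lemma poch_neg_nat (n m : ℕ) : poch (-(n : ℝ)) m = (-1) ^ m * (n.descFactorial m : ℝ) := by
  induction m with
  | zero => simp [poch]
  | succ m ih =>
    rw [poch, Finset.prod_range_succ, ← poch, ih, Nat.descFactorial_succ]
    rcases le_or_gt m n with h | h
    · have : ((n - m : ℕ) : ℝ) = (n : ℝ) - m := by
        push_cast [h]; ring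
      push_cast [this]; ring
    · rw [Nat.descFactorial_eq_zero_iff_lt.2 h]; simp

lemma poch_neg_x (x : ℝ) (k : ℕ) : poch (-x) k = (-1) ^ k * fallingFac x k := by
  induction k with
  | zero => simp [poch, fallingFac]
  | succ k ih =>
    rw [poch, fallingFac, Finset.prod_range_succ, Finset.prod_range_succ,
      ← poch, ← fallingFac, ih]
    ring

lemma alt_sum_choose (N : ℕ) :
    ∑ i ∈ Finset.range (N + 1), (-1 : ℝ) ^ i * (N.choose i : ℝ)
      = if N = 0 then 1 else 0 := by
  rcases eq_or_ne N 0 with h0 | h0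
  · subst h0; simp
  · rw [if_neg h0]
    have h := Int.alternating_sum_range_choose_of_ne h0
    have h2 : ((∑ i ∈ Finset.range (N + 1), (-1 : ℤ) ^ i * (N.choose i : ℤ) : ℤ) : ℝ) = 0 := by
      rw [h]; simp
    push_cast at h2
    exact h2

lemma key_sum (n k : ℕ) (hk : k ≤ n) :
    ∑ m ∈ Finset.range (n + 1),
        poch (-(n : ℝ)) m * poch (-(m : ℝ)) k / (Nat.factorial m)
      = if k = n then ((Nat.factorial n : ℝ)) else 0 := by
  have hsub : Finset.Ico k (n + 1) ⊆ Finset.range (n + 1) := by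
    intro m hm
    simp only [Finset.mem_Ico] at hm
    exact Finset.mem_range.2 hm.2
  rw [← Finset.sum_subset hsub (by
    intro m hm hm'
    simp only [Finset.mem_range] at hm
    simp only [Finset.mem_Ico, not_and, not_le] at hm'
    have hmk : m < k := by
      by_contra h
      exact absurd (hm' (le_of_not_gt h)) (by omega)
    rw [poch_neg_nat m k, Nat.descFactorial_eq_zero_iff_lt.2 hmk]
    simp)]
  rw [Finset.sum_Ico_eq_sum_range]
  have hstep : ∀ j ∈ Finset.range (n + 1 - k),
      poch (-(n : ℝ)) (k + j) * poch (-((k + j : ℕ) : ℝ)) k / (Nat.factorial (k + j))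
        = (Nat.factorial k : ℝ) * (n.choose k : ℝ) * ((-1) ^ j * ((n - k).choose j : ℝ)) := by
    intro j hj
    have hjn : k + j ≤ n := by
      simp only [Finset.mem_range] at hj; omega
    have hcm' : (n.choose (k + j) : ℝ) * ((k + j).choose k : ℝ)
        = (n.choose k : ℝ) * ((n - k).choose j : ℝ) := by
      have h := Nat.choose_mul (n := n) (k := k + j) (s := k) (Nat.le_add_right k j)
      have hj' : k + j - k = j := by omega
      rw [hj'] at h
      exact_mod_cast h
    have hsign : ((-1 : ℝ)) ^ (k + j) * (-1) ^ k = (-1) ^ j := by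
      rw [← pow_add, show k + j + k = j + 2 * k from by omega, pow_add, pow_mul,
        neg_one_sq, one_pow, mul_one]
    have hfac : (Nat.factorial (k + j) : ℝ) ≠ 0 := Nat.cast_ne_zero.2 (Nat.factorial_ne_zero _)
    rw [poch_neg_nat, poch_neg_nat, Nat.descFactorial_eq_factorial_mul_choose,
      Nat.descFactorial_eq_factorial_mul_choose]
    push_cast
    rw [div_eq_iff hfac]
    linear_combination ((-1 : ℝ) ^ j * (Nat.factorial (k + j) : ℝ) * (Nat.factorial k : ℝ)) * hcm'
      + ((Nat.factorial (k + j) : ℝ) * (Nat.factorial k : ℝ) * ((n.choose (k + j)) : ℝ)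
          * (((k + j).choose k) : ℝ)) * hsign
  rw [Finset.sum_congr rfl hstep, ← Finset.mul_sum]
  have hNk : n + 1 - k = (n - k) + 1 := by omega
  rw [hNk, alt_sum_choose (n - k)]
  rcases eq_or_ne k n with h | h
  · subst h
    simp [Nat.choose_self]
  · have : n - k ≠ 0 := by omega
    simp [this, h]

lemma charlier_extend (m n : ℕ) (hmn : m ≤ n) (μ x : ℝ) :
    charlier m μ x = ∑ k ∈ Finset.range (n + 1),
      poch (-(m : ℝ)) k * poch (-x) k * (-1 / μ) ^ k / (Nat.factorial k) := by
  unfold charlier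
  apply Finset.sum_subset
  · exact Finset.range_subset_range.2 (by omega)
  · intro k hk hk'
    simp only [Finset.mem_range, not_lt] at hk'
    have : m < k := by omega
    rw [poch_neg_nat m k, Nat.descFactorial_eq_zero_iff_lt.2 this]
    simp

theorem fallingFac_charlier_expansion (n : ℕ) (μ : ℝ) (hμ : μ ≠ 0) (x : ℝ) :
    fallingFac x n =
      ∑ m ∈ Finset.range (n + 1),
        μ ^ n * (poch (-(n : ℝ)) m / (Nat.factorial m)) * charlier m μ x := by
  have step1 : ∀ m ∈ Finset.range (n + 1),
      μ ^ n * (poch (-(n : ℝ)) m / (Nat.factorial m)) * charlier m μ x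
        = ∑ k ∈ Finset.range (n + 1),
            (μ ^ n * poch (-x) k * (-1 / μ) ^ k / (Nat.factorial k))
              * (poch (-(n : ℝ)) m * poch (-(m : ℝ)) k / (Nat.factorial m)) := by
    intro m hm
    have hmn : m ≤ n := by simp only [Finset.mem_range] at hm; omega
    rw [charlier_extend m n hmn, Finset.mul_sum]
    apply Finset.sum_congr rfl
    intro k _
    ring
  rw [Finset.sum_congr rfl step1, Finset.sum_comm]
  have step2 : ∀ k ∈ Finset.range (n + 1),
      ∑ m ∈ Finset.range (n + 1),
          (μ ^ n * poch (-x) k * (-1 / μ) ^ k / (Nat.factorial k))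
            * (poch (-(n : ℝ)) m * poch (-(m : ℝ)) k / (Nat.factorial m))
        = (μ ^ n * poch (-x) k * (-1 / μ) ^ k / (Nat.factorial k))
            * (if k = n then ((Nat.factorial n : ℝ)) else 0) := by
    intro k hk
    have hkn : k ≤ n := by simp only [Finset.mem_range] at hk; omega
    rw [← Finset.mul_sum, key_sum n k hkn]
  rw [Finset.sum_congr rfl step2]
  have hif : ∀ k ∈ Finset.range (n + 1),
      (μ ^ n * poch (-x) k * (-1 / μ) ^ k / (Nat.factorial k))
          * (if k = n then ((Nat.factorial n : ℝ)) else 0)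
        = if k = n then μ ^ n * poch (-x) n * (-1 / μ) ^ n else 0 := by
    intro k _
    split
    · next h =>
      subst h
      have : (Nat.factorial k : ℝ) ≠ 0 := Nat.cast_ne_zero.2 (Nat.factorial_ne_zero _)
      field_simp
    · ring
  rw [Finset.sum_congr rfl hif, Finset.sum_ite_eq' (Finset.range (n + 1)) n]
  rw [if_pos (Finset.mem_range.2 (by omega))]
  rw [poch_neg_x]
  have h2 : ((-1 : ℝ)) ^ n * ((-1 : ℝ)) ^ n = 1 := by
    rw [← pow_add, ← two_mul, pow_mul, neg_one_sq, one_pow]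
  have hm : (μ : ℝ) ^ n ≠ 0 := pow_ne_zero _ hμ
  rw [eq_comm, div_pow]
  field_simp
  linear_combination (fallingFac x n) * h2
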